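/- Let n be a positive natural number and let T : (Fin n → ℝ) → ℝ be a location equivariant estimator, i.e., T(X + c) = T(X) + c for every sample X : Fin n → ℝ and every constant c ∈ ℝ (where X + c denotes the sample with c added to every coordinate). Then the finite-sample replacement breakdown point of T at any sample X is at most ⌈(n+1)/2⌉/n; in particular, there exists m ≤ ⌈(n+1)/2⌉ such that the supremum over all samples Y differing from X in at most m coordinates of |T(Y) - T(X)| is infinite (i.e., unbounded: for every M > 0 there is such a Y with |T(Y) - T(X)| > M). -/

import Mathlib

/-- A location equivariant estimator `T` has finite-sample replacement
breakdown point at most `⌈(n+1)/2⌉ / n` at every sample `X`: there is some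
`m ≤ ⌈(n+1)/2⌉` such that the supremum of `|T Y - T X|` over samples `Y` differing
from `X` in at most `m` coordinates is infinite, i.e. for every `M > 0` there is such
a `Y` with `|T Y - T X| > M`. -/
theorem location_equivariant_breakdown_at_most_half
    (n : ℕ) (hn : 0 < n) (T : (Fin n → ℝ) → ℝ)
    (hequiv : ∀ (X : Fin n → ℝ) (c : ℝ), T (fun i => X i + c) = T X + c) :
    ∀ X : Fin n → ℝ, ∃ m : ℕ, m ≤ ⌈((n : ℝ) + 1) / 2⌉₊ ∧
      ∀ M : ℝ, 0 < M → ∃ Y : Fin n → ℝ,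
        (Finset.univ.filter (fun i => Y i ≠ X i)).card ≤ m ∧
        M < |T Y - T X| := by
  intro X
  set m : ℕ := ⌈((n : ℝ) + 1) / 2⌉₊ with hm
  refine ⟨m, le_rfl, ?_⟩
  have hle : ((n : ℝ) + 1) / 2 ≤ (m : ℝ) := Nat.le_ceil _
  have h2m : n + 1 ≤ 2 * m := by
    have : (n : ℝ) + 1 ≤ 2 * m := by linarith
    exact_mod_cast this
  have hnm : n - m ≤ m := by omega
  intro M hM
  set c : ℝ := 2 * M + 2 with hc
  have hcpos : 0 < c := by positivity
  set Z : Fin n → ℝ := fun i => if (i : ℕ) < m then X i + c else X i with hZ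
  set Z' : Fin n → ℝ := fun i => Z i + (-c) with hZ'
  have hTZ : T Z' = T Z - c := by
    have := hequiv Z (-c)
    simpa [hZ', sub_eq_add_neg] using this
  -- cardinality bounds
  have hcardZ : (Finset.univ.filter (fun i => Z i ≠ X i)).card ≤ m := by
    have hsub : (Finset.univ.filter (fun i => Z i ≠ X i)) ⊆
        (Finset.univ.filter (fun i : Fin n => (i : ℕ) < m)) := by
      intro i hi
      simp only [Finset.mem_filter, Finset.mem_univ, true_and] at hi ⊢
      by_contra h
      apply hi
      simp [hZ, h]
    refine le_trans (Finset.card_le_card hsub) ?_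
    calc (Finset.univ.filter (fun i : Fin n => (i : ℕ) < m)).card
        ≤ (Finset.range m).card := by
          refine Finset.card_le_card_of_injOn (fun i => (i : ℕ)) ?_ ?_
          · intro i hi
            simp only [Finset.mem_coe, Finset.mem_filter] at hi
            simpa using hi.2
          · intro a _ b _ h
            exact Fin.ext h
      _ = m := Finset.card_range m
  have hcardZ' : (Finset.univ.filter (fun i => Z' i ≠ X i)).card ≤ m := by
    have hsub : (Finset.univ.filter (fun i => Z' i ≠ X i)) ⊆
        (Finset.univ.filter (fun i : Fin n => m ≤ (i : ℕ))) := by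
      intro i hi
      simp only [Finset.mem_filter, Finset.mem_univ, true_and] at hi ⊢
      by_contra h
      push_neg at h
      apply hi
      simp [hZ', hZ, h]
    refine le_trans (Finset.card_le_card hsub) (le_trans ?_ hnm)
    calc (Finset.univ.filter (fun i : Fin n => m ≤ (i : ℕ))).card
        ≤ (Finset.range (n - m)).card := by
          refine Finset.card_le_card_of_injOn (fun i => (i : ℕ) - m) ?_ ?_
          · intro i hi
            simp only [Finset.mem_coe, Finset.mem_filter, Finset.mem_univ, true_and] at hi
            have := i.isLt
            simp only [Finset.mem_coe, Finset.mem_range]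
            omega
          · intro a ha b hb h
            simp only [Finset.mem_coe, Finset.mem_filter, Finset.mem_univ, true_and] at ha hb
            apply Fin.ext
            have h' : (a : ℕ) - m = (b : ℕ) - m := h
            omega
      _ = n - m := Finset.card_range _
  -- one of Z, Z' works
  have hdiff : |T Z - T X| + |T Z' - T X| ≥ c := by
    have : T Z - T X - (T Z' - T X) = c := by rw [hTZ]; ring
    calc |T Z - T X| + |T Z' - T X| ≥ |(T Z - T X) - (T Z' - T X)| := abs_sub _ _
      _ = c := by rw [this]; exact abs_of_pos hcpos
  rcases le_or_gt |T Z - T X| M with h | h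
  · refine ⟨Z', hcardZ', ?_⟩
    linarith
  · exact ⟨Z, hcardZ, h⟩
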